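/- Let n > m ≥ 0 and define H(j,k) = (−1)^{b(j,k)} for j, k ∈ {0, …, 2ⁿ − 1}, where b(j,k) is the number of bit positions at which the binary expansions of j and k both have a 1. For 0 ≤ i ≤ 2^{n−m} − 1 and 0 ≤ r ≤ 2^m − 1, set e^i_r = (1/√(2ⁿ − 2^m)) · (H(j, i·2^m + r))_{2^m ≤ j ≤ 2ⁿ−1} ∈ ℝ^{2ⁿ−2^m}. Then for each fixed i, the family (e^i_r)_{r=0}^{2^m−1} is orthonormal; consequently the subspace W_i = span{e^i_r : 0 ≤ r ≤ 2^m − 1} of ℝ^{2ⁿ−2^m} has dimension 2^m. -/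

import Mathlib

open scoped InnerProductSpace

/-- `bitOverlap j k` is the number of bit positions at which the binary
expansions of `j` and `k` both have a `1`. -/
def bitOverlap (j k : ℕ) : ℕ := (Nat.land j k).bits.count true


lemma popcount_bit (b : Bool) (n : ℕ) : ((Nat.bit b n).bits.count true) = b.toNat + n.bits.count true := by
  rcases eq_or_ne n 0 with rfl | h
  · cases b <;> simp [Nat.bit]
  · rw [Nat.bits_append_bit _ _ (fun h' => absurd h' h)]; cases b <;> simp [Nat.add_comm]

lemma bitOverlap_bit (a b : Bool) (m n : ℕ) :
    bitOverlap (Nat.bit a m) (Nat.bit b n) = (a && b).toNat + bitOverlap m n := by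
  unfold bitOverlap
  rw [show Nat.land (Nat.bit a m) (Nat.bit b n) = Nat.bit (a && b) (Nat.land m n) from
    Nat.land_bit a m b n, popcount_bit]

lemma bitOverlap_zero_left (k : ℕ) : bitOverlap 0 k = 0 := by
  unfold bitOverlap
  rw [show Nat.land 0 k = 0 from Nat.zero_and k]
  simp

lemma sum_pair (f : ℕ → ℝ) (n : ℕ) :
    ∑ j ∈ Finset.range (2 * n), f j = ∑ q ∈ Finset.range n, (f (2 * q) + f (2 * q + 1)) := by
  induction n with
  | zero => simp
  | succ n ih =>
    rw [Finset.sum_range_succ, ← ih, Nat.mul_succ, Finset.sum_range_succ, Finset.sum_range_succ]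
    ring

lemma bit_eq (r : ℕ) : r = 2 * r.div2 + r.bodd.toNat := by
  have := Nat.bodd_add_div2 r
  cases hb : r.bodd <;> simp [hb, Bool.toNat] at this ⊢ <;> omega

lemma key (N : ℕ) : ∀ r s : ℕ, r < 2 ^ N → s < 2 ^ N → r ≠ s →
    ∑ j ∈ Finset.range (2 ^ N), ((-1 : ℝ)) ^ bitOverlap j r * (-1) ^ bitOverlap j s = 0 := by
  induction N with
  | zero => intro r s hr hs hrs; interval_cases r <;> interval_cases s <;> simp_all
  | succ N ih =>
    intro r s hr hs hrs
    rw [pow_succ, mul_comm, sum_pair]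
    have hbit : ∀ (q c : ℕ) (b : Bool),
        bitOverlap (Nat.bit b q) c = (b && c.bodd).toNat + bitOverlap q c.div2 := by
      intro q c b
      conv_lhs => rw [← Nat.bit_bodd_div2 c]
      rw [bitOverlap_bit]
    have h2q : ∀ q : ℕ, 2 * q = Nat.bit false q := by intro q; simp [Nat.bit]
    have h2q1 : ∀ q : ℕ, 2 * q + 1 = Nat.bit true q := by intro q; simp [Nat.bit]
    have hterm : ∀ q ∈ Finset.range (2 ^ N),
        (-1 : ℝ) ^ bitOverlap (2 * q) r * (-1) ^ bitOverlap (2 * q) s +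
          (-1 : ℝ) ^ bitOverlap (2 * q + 1) r * (-1) ^ bitOverlap (2 * q + 1) s =
        (1 + (-1 : ℝ) ^ (r.bodd.toNat + s.bodd.toNat)) *
          ((-1 : ℝ) ^ bitOverlap q r.div2 * (-1) ^ bitOverlap q s.div2) := by
      intro q _
      rw [h2q1, h2q, hbit, hbit, hbit, hbit]
      simp only [Bool.false_and, Bool.true_and, Bool.toNat_false, Nat.zero_add, pow_add]
      ring
    rw [Finset.sum_congr rfl hterm, ← Finset.mul_sum]
    rcases eq_or_ne r.div2 s.div2 with hdiv | hdiv
    · have hodd : r.bodd ≠ s.bodd := by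
        intro h
        apply hrs
        rw [← Nat.bit_bodd_div2 r, ← Nat.bit_bodd_div2 s, h, hdiv]
      have h0 : (1 + (-1 : ℝ) ^ (r.bodd.toNat + s.bodd.toNat)) = 0 := by
        cases hb : r.bodd <;> cases hbs : s.bodd <;>
          first
          | (exfalso; exact hodd (hb.trans hbs.symm))
          | norm_num
      rw [h0, zero_mul]
    · have hrd : r.div2 < 2 ^ N := by
        rw [Nat.div2_val]
        exact Nat.div_lt_of_lt_mul (by rw [mul_comm]; exact hr.trans_le (le_of_eq (pow_succ 2 N)))
      have hsd : s.div2 < 2 ^ N := by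
        rw [Nat.div2_val]
        exact Nat.div_lt_of_lt_mul (by rw [mul_comm]; exact hs.trans_le (le_of_eq (pow_succ 2 N)))
      rw [ih r.div2 s.div2 hrd hsd hdiv, mul_zero]

lemma trunc (m : ℕ) : ∀ j a r : ℕ, j < 2 ^ m → r < 2 ^ m →
    bitOverlap j (a * 2 ^ m + r) = bitOverlap j r := by
  induction m with
  | zero =>
    intro j a r hj hr
    interval_cases j
    rw [bitOverlap_zero_left, bitOverlap_zero_left]
  | succ m ih =>
    intro j a r hj hr
    have hj2 : j.div2 < 2 ^ m := by
      rw [Nat.div2_val]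
      exact Nat.div_lt_of_lt_mul (by rw [mul_comm]; exact hj.trans_le (le_of_eq (pow_succ 2 m)))
    have hr2 : r.div2 < 2 ^ m := by
      rw [Nat.div2_val]
      exact Nat.div_lt_of_lt_mul (by rw [mul_comm]; exact hr.trans_le (le_of_eq (pow_succ 2 m)))
    set b := r.bodd with hbdef
    set k := r.div2 with hkdef
    have h1 : r = 2 * k + b.toNat := bit_eq r
    have hdecomp : a * 2 ^ (m + 1) + r = Nat.bit b (a * 2 ^ m + k) := by
      rw [h1]
      cases b <;> simp [Nat.bit, pow_succ] <;> ring
    conv_lhs => rw [← Nat.bit_bodd_div2 j, hdecomp, bitOverlap_bit]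
    rw [ih j.div2 a k hj2 hr2]
    conv_rhs => rw [← Nat.bit_bodd_div2 j, ← Nat.bit_bodd_div2 r, bitOverlap_bit]

/-- For each `i`, the normalized truncated columns `e i r` of the Sylvester
matrix form an orthonormal family, so `W_i = span {e i r}` has dimension `2^m`. -/
theorem stmt_11 (n m : ℕ) (hmn : m < n)
    (e : Fin (2 ^ (n - m)) → Fin (2 ^ m) → EuclideanSpace ℝ (Fin (2 ^ n - 2 ^ m)))
    (he : ∀ (i : Fin (2 ^ (n - m))) (r : Fin (2 ^ m)) (j : Fin (2 ^ n - 2 ^ m)),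
      e i r j = (1 / Real.sqrt ((2 ^ n : ℝ) - 2 ^ m)) *
        (-1 : ℝ) ^ bitOverlap (j.val + 2 ^ m) (i.val * 2 ^ m + r.val)) :
    ∀ i : Fin (2 ^ (n - m)),
      Orthonormal ℝ (e i) ∧
        Module.finrank ℝ ↥(Submodule.span ℝ (Set.range (e i))) = 2 ^ m := by
  intro i
  have h2m : (2 : ℕ) ^ m < 2 ^ n := Nat.pow_lt_pow_right one_lt_two hmn
  have hd : 0 < 2 ^ n - 2 ^ m := Nat.sub_pos_of_lt h2m
  have hcast : ((2 : ℝ) ^ n - 2 ^ m) = ((2 ^ n - 2 ^ m : ℕ) : ℝ) := by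
    push_cast [Nat.cast_sub h2m.le]; ring
  set c : ℝ := 1 / Real.sqrt ((2 ^ n : ℝ) - 2 ^ m) with hc
  have hpos : (0 : ℝ) < ((2 ^ n - 2 ^ m : ℕ) : ℝ) := by exact_mod_cast hd
  have hc2 : c * c = 1 / ((2 ^ n - 2 ^ m : ℕ) : ℝ) := by
    rw [hc, hcast, div_mul_div_comm, one_mul, Real.mul_self_sqrt hpos.le]
  have hA : ∀ r : Fin (2 ^ m), i.val * 2 ^ m + r.val < 2 ^ n := by
    intro r
    calc i.val * 2 ^ m + r.val < (i.val + 1) * 2 ^ m := by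
          rw [add_mul, one_mul]; exact Nat.add_lt_add_left r.isLt _
      _ ≤ 2 ^ (n - m) * 2 ^ m := Nat.mul_le_mul_right _ (Nat.succ_le_of_lt i.isLt)
      _ = 2 ^ n := by rw [← pow_add, Nat.sub_add_cancel hmn.le]
  have hinner : ∀ r s : Fin (2 ^ m), ⟪e i r, e i s⟫_ℝ = if r = s then (1 : ℝ) else 0 := by
    intro r s
    set A := i.val * 2 ^ m + r.val with hAdef
    set B := i.val * 2 ^ m + s.val with hBdef
    have step1 : ⟪e i r, e i s⟫_ℝ =
        (c * c) * ∑ j ∈ Finset.range (2 ^ n - 2 ^ m),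
          ((-1 : ℝ) ^ bitOverlap (2 ^ m + j) A * (-1) ^ bitOverlap (2 ^ m + j) B) := by
      rw [PiLp.inner_apply]
      simp only [he, RCLike.inner_apply, conj_trivial]
      rw [Finset.mul_sum, ← Fin.sum_univ_eq_sum_range
        (fun j => (c*c) * ((-1 : ℝ) ^ bitOverlap (2 ^ m + j) A * (-1) ^ bitOverlap (2 ^ m + j) B))]
      refine Finset.sum_congr rfl fun j _ => ?_
      rw [Nat.add_comm (2 ^ m) j.val]
      ring
    have step2 : ∑ j ∈ Finset.range (2 ^ n - 2 ^ m),
          ((-1 : ℝ) ^ bitOverlap (2 ^ m + j) A * (-1) ^ bitOverlap (2 ^ m + j) B) =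
        ∑ j ∈ Finset.Ico (2 ^ m) (2 ^ n),
          ((-1 : ℝ) ^ bitOverlap j A * (-1) ^ bitOverlap j B) := by
      rw [Finset.sum_Ico_eq_sum_range]
    have step3 : ∑ j ∈ Finset.Ico (2 ^ m) (2 ^ n),
          ((-1 : ℝ) ^ bitOverlap j A * (-1) ^ bitOverlap j B) =
        (∑ j ∈ Finset.range (2 ^ n), ((-1 : ℝ) ^ bitOverlap j A * (-1) ^ bitOverlap j B)) -
        (∑ j ∈ Finset.range (2 ^ m), ((-1 : ℝ) ^ bitOverlap j A * (-1) ^ bitOverlap j B)) := by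
      rw [Finset.sum_Ico_eq_sub _ h2m.le]
    rw [step1, step2, step3]
    rcases eq_or_ne r s with rfl | hrs
    · rw [if_pos rfl]
      have hone : ∀ j : ℕ, (-1 : ℝ) ^ bitOverlap j A * (-1) ^ bitOverlap j A = 1 := by
        intro j
        rw [← pow_add, ← two_mul]
        exact Even.neg_one_pow (even_two_mul _)
      rw [show B = A from hBdef.trans hAdef.symm]
      simp only [hone, Finset.sum_const, Finset.card_range, nsmul_eq_mul, mul_one]
      rw [hc2]
      field_simp
      exact_mod_cast hcast
    · simp only [if_neg hrs]
      have hAB : A ≠ B := by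
        simp only [hAdef, hBdef]
        intro h
        exact hrs (Fin.ext (by omega))
      have h1 : ∑ j ∈ Finset.range (2 ^ n), ((-1 : ℝ) ^ bitOverlap j A * (-1) ^ bitOverlap j B)
          = 0 := key n A B (hA r) (hA s) hAB
      have h2 : ∑ j ∈ Finset.range (2 ^ m), ((-1 : ℝ) ^ bitOverlap j A * (-1) ^ bitOverlap j B)
          = 0 := by
        rw [Finset.sum_congr rfl (fun j hj => ?_)]
        · exact key m r.val s.val r.isLt s.isLt (fun h => hrs (Fin.ext h))
        · rw [hAdef, hBdef, trunc m j i.val r.val (Finset.mem_range.mp hj) r.isLt,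
            trunc m j i.val s.val (Finset.mem_range.mp hj) s.isLt]
      rw [h1, h2, sub_zero, mul_zero]
  have hon : Orthonormal ℝ (e i) := orthonormal_iff_ite.mpr hinner
  exact ⟨hon, by rw [finrank_span_eq_card hon.linearIndependent, Fintype.card_fin]⟩
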